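/- Let α be irrational with convergents p_{n−1}/q_{n−1}, p_n/q_n, p_{n+1}/q_{n+1} for some n ≥ 2. Then there exist odd integers u, v with q_{n−1} ≤ v ≤ q_{n+1} such that |α − u/v| < 2/v². -/

import Mathlib

/-- Complete quotients of the continued fraction expansion of `α`. -/
noncomputable def cfCQ (α : ℝ) : ℕ → ℝ
  | 0 => α
  | n + 1 => 1 / (cfCQ α n - ⌊cfCQ α n⌋)

/-- Partial quotients `a n` of the continued fraction expansion of `α`. -/
noncomputable def cfA (α : ℝ) (n : ℕ) : ℤ := ⌊cfCQ α n⌋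

/-- Numerators `p n` of the convergents of the continued fraction expansion of `α`. -/
noncomputable def cfP (α : ℝ) : ℕ → ℤ
  | 0 => cfA α 0
  | 1 => cfA α 0 * cfA α 1 + 1
  | n + 2 => cfA α (n + 2) * cfP α (n + 1) + cfP α n

/-- Denominators `q n` of the convergents of the continued fraction expansion of `α`. -/
noncomputable def cfQ (α : ℝ) : ℕ → ℤ
  | 0 => 1
  | 1 => cfA α 1
  | n + 2 => cfA α (n + 2) * cfQ α (n + 1) + cfQ α n

lemma cfCQ_irr {α : ℝ} (hα : Irrational α) : ∀ n, Irrational (cfCQ α n)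
  | 0 => hα
  | (n+1) => by
    have h := cfCQ_irr hα n
    rw [show cfCQ α (n+1) = 1 / (cfCQ α n - ⌊cfCQ α n⌋) from rfl, one_div]
    exact (h.sub_intCast _).inv

lemma cfCQ_gt_one {α : ℝ} (hα : Irrational α) (n : ℕ) : 1 < cfCQ α (n+1) := by
  have h := cfCQ_irr hα n
  have h1 : (⌊cfCQ α n⌋ : ℝ) < cfCQ α n := (Int.floor_le _).lt_of_ne (Ne.symm (h.ne_int _))
  have h2 : cfCQ α n - ⌊cfCQ α n⌋ < 1 := by
    have := Int.lt_floor_add_one (cfCQ α n); linarith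
  rw [show cfCQ α (n+1) = 1 / (cfCQ α n - ⌊cfCQ α n⌋) from rfl, lt_div_iff₀ (by linarith)]
  linarith

lemma cfCQ_mul {α : ℝ} (hα : Irrational α) (n : ℕ) :
    cfCQ α (n+1) * (cfCQ α n - (cfA α n : ℝ)) = 1 := by
  have h := cfCQ_irr hα n
  have hne : cfCQ α n - (⌊cfCQ α n⌋ : ℝ) ≠ 0 := sub_ne_zero.mpr (h.ne_int _)
  rw [show cfCQ α (n+1) = 1 / (cfCQ α n - ⌊cfCQ α n⌋) from rfl, cfA, one_div,
    inv_mul_cancel₀ hne]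

lemma cfA_ge_one {α : ℝ} (hα : Irrational α) (n : ℕ) : 1 ≤ cfA α (n+1) :=
  Int.le_floor.mpr (by exact_mod_cast (cfCQ_gt_one hα n).le)

lemma cfQ_ge_one {α : ℝ} (hα : Irrational α) : ∀ n, 1 ≤ cfQ α n := by
  have key : ∀ n, 1 ≤ cfQ α n ∧ 1 ≤ cfQ α (n+1) := by
    intro n
    induction n with
    | zero => exact ⟨le_refl 1, cfA_ge_one hα 0⟩
    | succ n ih =>
      refine ⟨ih.2, ?_⟩
      have ha := cfA_ge_one hα (n+1)
      simp only [cfQ]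
      nlinarith [ih.1, ih.2]
  exact fun n => (key n).1

lemma cfQ_lt {α : ℝ} (hα : Irrational α) (n : ℕ) : cfQ α (n+1) < cfQ α (n+2) := by
  have ha := cfA_ge_one hα (n+1)
  have h1 := cfQ_ge_one hα n
  have h2 := cfQ_ge_one hα (n+1)
  simp only [cfQ]
  nlinarith

lemma cfQ_mono {α : ℝ} (hα : Irrational α) (n : ℕ) : cfQ α n ≤ cfQ α (n+1) := by
  cases n with
  | zero => simpa [cfQ] using cfA_ge_one hα 0
  | succ n => exact (cfQ_lt hα n).le

lemma cfDet (α : ℝ) : ∀ k, cfP α k * cfQ α (k+1) - cfP α (k+1) * cfQ α k = (-1)^(k+1) := by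
  intro k
  induction k with
  | zero => simp [cfP, cfQ]
  | succ k ih =>
    simp only [cfP, cfQ]
    linear_combination (-1 : ℤ) * ih

lemma step_helper (A x y c b b' d d' : ℝ)
    (h1 : y * (x - c) = 1) (h2 : A * (x * b + b') = x * d + d') :
    A * (y * (c * b + b') + b) = y * (c * d + d') + d := by
  linear_combination y * h2 + (d - A * b) * h1

lemma cfKey {α : ℝ} (hα : Irrational α) : ∀ m : ℕ,
    α * (cfCQ α (m+2) * (cfQ α (m+1) : ℝ) + (cfQ α m : ℝ)) =
      cfCQ α (m+2) * (cfP α (m+1) : ℝ) + (cfP α m : ℝ) := by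
  intro m
  induction m with
  | zero =>
    have h0 := cfCQ_mul hα 0
    rw [show cfCQ α 0 = α from rfl] at h0
    have hb : α * (cfCQ α 1 * 1 + 0) = cfCQ α 1 * (cfA α 0 : ℝ) + 1 := by
      linear_combination h0
    have h := step_helper α (cfCQ α 1) (cfCQ α 2) (cfA α 1 : ℝ) 1 0 (cfA α 0 : ℝ) 1
      (cfCQ_mul hα 1) hb
    simp only [cfP, cfQ]
    push_cast
    linear_combination h
  | succ m ih =>
    have h := step_helper α (cfCQ α (m+2)) (cfCQ α (m+3)) (cfA α (m+2) : ℝ)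
      (cfQ α (m+1) : ℝ) (cfQ α m : ℝ) (cfP α (m+1) : ℝ) (cfP α m : ℝ)
      (cfCQ_mul hα (m+2)) ih
    show α * (cfCQ α (m+3) * (cfQ α (m+2) : ℝ) + (cfQ α (m+1) : ℝ)) =
      cfCQ α (m+3) * (cfP α (m+2) : ℝ) + (cfP α (m+1) : ℝ)
    simp only [cfP, cfQ]
    push_cast
    linear_combination h

lemma conv_diff {α : ℝ} (hα : Irrational α) (m : ℕ) :
    (α * (cfQ α (m+1) : ℝ) - (cfP α (m+1) : ℝ)) *
      (cfCQ α (m+2) * (cfQ α (m+1) : ℝ) + (cfQ α m : ℝ)) = (-1)^(m+1) := by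
  have hk := cfKey hα m
  have hd : ((cfP α m : ℝ)) * (cfQ α (m+1) : ℝ) - (cfP α (m+1) : ℝ) * (cfQ α m : ℝ)
      = (-1)^(m+1) := by exact_mod_cast cfDet α m
  linear_combination (cfQ α (m+1) : ℝ) * hk + hd

lemma conv_approx {α : ℝ} (hα : Irrational α) (m : ℕ) :
    |α - (cfP α (m+1) : ℝ) / (cfQ α (m+1) : ℝ)| < 2 / (cfQ α (m+1) : ℝ)^2 := by
  have hq1 : (1:ℝ) ≤ (cfQ α (m+1) : ℝ) := by exact_mod_cast cfQ_ge_one hα (m+1)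
  have hq0 : (1:ℝ) ≤ (cfQ α m : ℝ) := by exact_mod_cast cfQ_ge_one hα m
  have hx : 1 < cfCQ α (m+2) := cfCQ_gt_one hα (m+1)
  set X := cfCQ α (m+2) * (cfQ α (m+1) : ℝ) + (cfQ α m : ℝ) with hXdef
  have hX : (cfQ α (m+1) : ℝ) < X := by nlinarith
  have hXpos : (0:ℝ) < X := by linarith
  have hqpos : (0:ℝ) < (cfQ α (m+1) : ℝ) := by linarith
  have h5 := conv_diff hα m
  have h6 : |α * (cfQ α (m+1) : ℝ) - (cfP α (m+1) : ℝ)| * X = 1 := by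
    rw [← abs_of_pos hXpos, ← abs_mul, h5, abs_pow, abs_neg, abs_one, one_pow]
  have h7 : α - (cfP α (m+1) : ℝ) / (cfQ α (m+1) : ℝ)
      = (α * (cfQ α (m+1) : ℝ) - (cfP α (m+1) : ℝ)) / (cfQ α (m+1) : ℝ) := by
    field_simp
  rw [h7, abs_div, abs_of_pos hqpos]
  have h8 : |α * (cfQ α (m+1) : ℝ) - (cfP α (m+1) : ℝ)| = 1 / X := by
    field_simp [hXpos.ne'] at h6 ⊢
    linarith [h6]
  rw [h8, div_div, div_lt_div_iff₀ (by positivity) (by positivity)]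
  nlinarith [mul_lt_mul_of_pos_right (show (cfQ α (m+1) : ℝ) < 2*X by linarith) hqpos]

lemma parity_lemma (a b c d : ℤ) (h : Odd (a*d - c*b))
    (h1 : ¬(Odd a ∧ Odd b)) (h2 : ¬(Odd c ∧ Odd d)) :
    Odd (a + c) ∧ Odd (b + d) := by
  rcases Int.even_or_odd a with ha|ha <;> rcases Int.even_or_odd b with hb|hb <;>
  rcases Int.even_or_odd c with hc|hc <;> rcases Int.even_or_odd d with hd|hd <;>
  simp_all [Int.even_add, Int.odd_sub, Int.even_mul, Int.odd_add,
    ← Int.not_even_iff_odd, parity_simps]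



/-- For irrational `α` and `n ≥ 2` there are odd integers `u, v` with
`q (n-1) ≤ v ≤ q (n+1)` and `|α - u/v| < 2/v²`. -/
theorem oddOdd_approx_between_denominators (α : ℝ) (hα : Irrational α) (n : ℕ) (hn : 2 ≤ n) :
    ∃ u v : ℤ, Odd u ∧ Odd v ∧ cfQ α (n - 1) ≤ v ∧ v ≤ cfQ α (n + 1) ∧
      |α - (u : ℝ) / (v : ℝ)| < 2 / (v : ℝ) ^ 2 := by
  obtain ⟨k, rfl⟩ : ∃ k, n = k + 2 := ⟨n - 2, by omega⟩
  simp only [show k+2-1 = k+1 from rfl, show k+2+1 = k+3 from rfl]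
  by_cases hA : Odd (cfP α (k+1)) ∧ Odd (cfQ α (k+1))
  · exact ⟨cfP α (k+1), cfQ α (k+1), hA.1, hA.2, le_refl _,
      le_trans (cfQ_mono hα (k+1)) (cfQ_mono hα (k+2)), conv_approx hα k⟩
  by_cases hB : Odd (cfP α (k+2)) ∧ Odd (cfQ α (k+2))
  · refine ⟨cfP α (k+2), cfQ α (k+2), hB.1, hB.2, (cfQ_mono hα (k+1)), cfQ_mono hα (k+2), ?_⟩
    exact conv_approx hα (k+1)
  · -- mediant case
    have hdet : cfP α (k+1) * cfQ α (k+2) - cfP α (k+2) * cfQ α (k+1) = (-1)^(k+2) := by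
      simpa using cfDet α (k+1)
    have hodd : Odd (cfP α (k+1) * cfQ α (k+2) - cfP α (k+2) * cfQ α (k+1)) := by
      rw [hdet]; exact Odd.pow (by decide)
    obtain ⟨hu, hv⟩ := parity_lemma _ _ _ _ hodd hA hB
    refine ⟨cfP α (k+1) + cfP α (k+2), cfQ α (k+1) + cfQ α (k+2), hu, hv, ?_, ?_, ?_⟩
    · linarith [cfQ_ge_one hα (k+2)]
    · have h3 : cfQ α (k+3) = cfA α (k+3) * cfQ α (k+2) + cfQ α (k+1) := rfl
      nlinarith [cfA_ge_one hα (k+2), cfQ_ge_one hα (k+2),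
        show cfA α (k+3) = cfA α (k+2+1) from rfl, h3]
    · -- the approximation inequality
      have hq1 : (1:ℝ) ≤ (cfQ α (k+1) : ℝ) := by exact_mod_cast cfQ_ge_one hα (k+1)
      have hq2 : ((cfQ α (k+1) : ℝ)) < (cfQ α (k+2) : ℝ) := by exact_mod_cast cfQ_lt hα k
      have hx : 1 < cfCQ α (k+3) := cfCQ_gt_one hα (k+2)
      have hk := cfKey hα (k+1)
      simp only [show k+1+2 = k+3 from rfl, show k+1+1 = k+2 from rfl] at hk
      have hd : (cfP α (k+1) : ℝ) * (cfQ α (k+2):ℝ) - (cfP α (k+2):ℝ) * (cfQ α (k+1):ℝ)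
          = (-1)^(k+2) := by exact_mod_cast hdet
      set X := cfCQ α (k+3) * (cfQ α (k+2) : ℝ) + (cfQ α (k+1) : ℝ) with hXdef
      have hXpos : 0 < X := by nlinarith
      have hvpos : (0:ℝ) < ((cfQ α (k+1) + cfQ α (k+2) : ℤ) : ℝ) := by push_cast; linarith
      have h5 : (α * ((cfQ α (k+1) + cfQ α (k+2) : ℤ) : ℝ) - ((cfP α (k+1) + cfP α (k+2) : ℤ) : ℝ)) * X
          = (-1)^(k+1) * (cfCQ α (k+3) - 1) := by
        push_cast
        linear_combination ((cfQ α (k+1) : ℝ) + (cfQ α (k+2) : ℝ)) * hk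
          - (cfCQ α (k+3) - 1) * hd
      have h6 : |α * ((cfQ α (k+1) + cfQ α (k+2) : ℤ) : ℝ) - ((cfP α (k+1) + cfP α (k+2) : ℤ) : ℝ)| * X
          = cfCQ α (k+3) - 1 := by
        rw [← abs_of_pos hXpos, ← abs_mul, h5, abs_mul, abs_pow, abs_neg, abs_one,
          one_pow, one_mul, abs_of_pos (by linarith : (0:ℝ) < cfCQ α (k+3) - 1)]
      have h8 : |α * ((cfQ α (k+1) + cfQ α (k+2) : ℤ) : ℝ) - ((cfP α (k+1) + cfP α (k+2) : ℤ) : ℝ)|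
          = (cfCQ α (k+3) - 1) / X := by
        rw [eq_div_iff hXpos.ne']; exact h6
      have h7 : α - ((cfP α (k+1) + cfP α (k+2) : ℤ) : ℝ) / ((cfQ α (k+1) + cfQ α (k+2) : ℤ) : ℝ)
          = (α * ((cfQ α (k+1) + cfQ α (k+2) : ℤ) : ℝ) - ((cfP α (k+1) + cfP α (k+2) : ℤ) : ℝ))
            / ((cfQ α (k+1) + cfQ α (k+2) : ℤ) : ℝ) := by
        have hvne : ((cfQ α (k+1) : ℝ) + (cfQ α (k+2) : ℝ)) ≠ 0 := by linarith
        field_simp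
      have hlt : (cfCQ α (k+3) - 1) / X < 2 / ((cfQ α (k+1) + cfQ α (k+2) : ℤ) : ℝ) := by
        rw [div_lt_div_iff₀ hXpos hvpos]
        push_cast
        nlinarith [mul_le_mul_of_nonneg_left hq2.le
          (by linarith : (0:ℝ) ≤ cfCQ α (k+3))]
      rw [h7, abs_div, abs_of_pos hvpos, h8]
      calc (cfCQ α (k+3) - 1) / X / ((cfQ α (k+1) + cfQ α (k+2) : ℤ) : ℝ)
          < (2 / ((cfQ α (k+1) + cfQ α (k+2) : ℤ) : ℝ)) / ((cfQ α (k+1) + cfQ α (k+2) : ℤ) : ℝ) := by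
            gcongr
        _ = 2 / ((cfQ α (k+1) + cfQ α (k+2) : ℤ) : ℝ)^2 := by rw [div_div, sq]
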